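/- arXiv:1412.6822 — 2 statements merged into one kernel-verified Lean document; each statement's English description precedes it below -/
import Mathlib

section
/- There exists a constant C > 0 such that for every nonempty factor v of η and every factor w of η with |w| ≥ C·|v|, the word v occurs as a factor of w. (In other words, the subshift generated by the fixed point η of τ is linearly repetitive.) -/
/-- The four-letter alphabet `A = {a, x, y, z}`. -/
inductive A : Type
  | a | x | y | z
  deriving DecidableEq, Repr

/-- The substitution `τ : a ↦ axa, x ↦ y, y ↦ z, z ↦ x`. -/
def tau : A → List A
  | A.a => [A.a, A.x, A.a]
  | A.x => [A.y]
  | A.y => [A.z]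
  | A.z => [A.x]

/-- The substitution `τ` extended to finite words by concatenation. -/
def tauW (w : List A) : List A := w.flatMap tau

/-- `pw n = τⁿ(a)`, a word of length `2^(n+1) - 1`. -/
def pw : ℕ → List A
  | 0 => [A.a]
  | n + 1 => tauW (pw n)

/-- The fixed point `η` of `τ`: the unique one-sided infinite word having every
`τⁿ(a)` as a prefix.  (Since `pw (n+1)` has length `2^(n+2) - 1 > n`, reading its
`n`-th letter is well defined and independent of the choice of a large enough iterate.) -/
def eta (n : ℕ) : A := (pw (n + 1)).getD n A.a

/-- `w` is a (finite) factor of `η`. -/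
def IsFactorEta (w : List A) : Prop :=
  ∃ i : ℕ, w = (List.range w.length).map (fun k => eta (i + k))

/-- the cycle letter `τⁿ(x)` -/
def c (n : ℕ) : A := if n % 3 = 0 then A.x else if n % 3 = 1 then A.y else A.z

lemma c_congr {m m' : ℕ} (h : m % 3 = m' % 3) : c m = c m' := by
  simp [c, h]

lemma tau_c (n : ℕ) : tau (c n) = [c (n + 1)] := by
  have h3 : n % 3 = 0 ∨ n % 3 = 1 ∨ n % 3 = 2 := by omega
  have h3' : (n + 1) % 3 = (n % 3 + 1) % 3 := by omega
  rcases h3 with h | h | h <;> simp [c, h, h3', tau]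

lemma tauW_append (u v : List A) : tauW (u ++ v) = tauW u ++ tauW v := by
  simp [tauW]

lemma tauW_cons (t : A) (v : List A) : tauW (t :: v) = tau t ++ tauW v := by
  simp [tauW]

lemma pw_succ (n : ℕ) : pw (n + 1) = pw n ++ c n :: pw n := by
  induction n with
  | zero => rfl
  | succ n ih =>
    show tauW (pw (n+1)) = pw (n+1) ++ c (n+1) :: pw (n+1)
    conv_lhs => rw [ih]
    rw [tauW_append, tauW_cons, tau_c]
    show pw (n+1) ++ ([c (n+1)] ++ pw (n+1)) = _
    simp

lemma pw_length (n : ℕ) : (pw n).length = 2 ^ (n + 1) - 1 := by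
  induction n with
  | zero => rfl
  | succ n ih =>
    rw [pw_succ]
    simp only [List.length_append, List.length_cons, ih]
    have : 1 ≤ 2 ^ (n + 1) := Nat.one_le_two_pow
    have h2 : 2 ^ (n + 2) = 2 * 2 ^ (n + 1) := by ring
    omega

/-- 2-adic valuation -/
def v2 : ℕ → ℕ
  | 0 => 0
  | m + 1 =>
    if (m + 1) % 2 = 0 then v2 ((m + 1) / 2) + 1 else 0
decreasing_by omega

lemma v2_odd {m : ℕ} (h : m % 2 = 1) : v2 m = 0 := by
  rcases m with _ | k
  · simp at h
  · rw [v2]; simp [h]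

lemma v2_two_mul {m : ℕ} (h : 0 < m) : v2 (2 * m) = v2 m + 1 := by
  obtain ⟨k, rfl⟩ : ∃ k, m = k + 1 := ⟨m - 1, by omega⟩
  rw [show 2 * (k + 1) = (2 * k + 1) + 1 by ring, v2]
  have h1 : (2 * k + 1 + 1) % 2 = 0 := by omega
  have h2 : (2 * k + 1 + 1) / 2 = k + 1 := by omega
  rw [h1, h2]
  simp

lemma v2_pow_mul (e m : ℕ) (hm : m % 2 = 1) : v2 (2 ^ e * m) = e := by
  induction e with
  | zero => simpa using v2_odd hm
  | succ e ih =>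
    rw [show 2 ^ (e + 1) * m = 2 * (2 ^ e * m) by ring, v2_two_mul, ih]
    exact Nat.mul_pos (pow_pos (by norm_num) e) (by omega)

lemma v2_mul_pow (n m : ℕ) (hm : 0 < m) : v2 (m * 2 ^ n) = n + v2 m := by
  induction n with
  | zero => simp
  | succ n ih =>
    rw [show m * 2 ^ (n + 1) = 2 * (m * 2 ^ n) by ring, v2_two_mul, ih]
    · omega
    · exact Nat.mul_pos (by omega) (pow_pos (by norm_num) n)

lemma v2_qpow_add (N q m : ℕ) (h1 : 0 < m) (h2 : m < 2 ^ N) :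
    v2 (q * 2 ^ N + m) = v2 m := by
  induction m using Nat.strong_induction_on generalizing N q with
  | _ m ih =>
    rcases Nat.even_or_odd m with he | ho
    · obtain ⟨m', rfl⟩ : ∃ m', m = 2 * m' := ⟨m / 2, by (rw [Nat.even_iff] at he); omega⟩
      have h2lt : 2 < 2 ^ N := by omega
      have hN2 : 2 ≤ N := by
        by_contra h
        interval_cases N <;> norm_num at h2lt
      have hpow : 2 ^ N = 2 * 2 ^ (N - 1) := by
        rw [← pow_succ']
        congr 1
        omega
      have key : q * 2 ^ N + 2 * m' = 2 * (q * 2 ^ (N - 1) + m') := by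
        rw [hpow]; ring
      rw [key, v2_two_mul (by omega), ih m' (by omega) (N - 1) q (by omega) (by omega),
        v2_two_mul (by omega)]
    · rw [Nat.odd_iff] at ho
      have hN : 1 ≤ N := by
        by_contra h
        interval_cases N <;> omega
      have hpow : 2 ^ N = 2 * 2 ^ (N - 1) := by
        rw [← pow_succ']
        congr 1
        omega
      have hq : q * 2 ^ N = 2 * (q * 2 ^ (N - 1)) := by rw [hpow]; ring
      have hsum : (q * 2 ^ N + m) % 2 = 1 := by omega
      rw [v2_odd hsum, v2_odd ho]

/-- Closed formula for `η`. -/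
def f (i : ℕ) : A := if i % 2 = 0 then A.a else c (v2 ((i + 1) / 2))

lemma pw_getD_eq_f (n : ℕ) : ∀ i < (pw n).length, (pw n).getD i A.a = f i := by
  induction n with
  | zero =>
    intro i hi
    simp [pw] at hi
    subst hi
    rfl
  | succ n ih =>
    intro i hi
    have hlen : (pw n).length = 2 ^ (n + 1) - 1 := pw_length n
    have hP : 1 ≤ 2 ^ (n + 1) := Nat.one_le_two_pow
    have hpow : 2 ^ (n + 2) = 2 * 2 ^ (n + 1) := by ring
    rw [pw_length] at hi
    rw [pw_succ]
    rcases Nat.lt_trichotomy i (2 ^ (n + 1) - 1) with h | h | h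
    · rw [List.getD_append _ _ _ _ (by omega), ih i (by omega)]
    · rw [List.getD_append_right _ _ _ _ (by omega)]
      have : i - (pw n).length = 0 := by omega
      rw [this]
      simp only [List.getD_cons_zero]
      have hodd : i % 2 = 1 := by
        subst h
        omega
      have hdiv : (i + 1) / 2 = 2 ^ n := by
        have : 2 ^ (n+1) = 2 * 2 ^ n := by ring
        omega
      rw [f, if_neg (by omega), hdiv]
      have : v2 (2 ^ n) = n := by
        simpa using v2_pow_mul n 1 (by norm_num)
      rw [this]
    · rw [List.getD_append_right _ _ _ _ (by omega)]
      have hi' : i - (pw n).length = (i - 2 ^ (n+1)) + 1 := by omega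
      rw [hi']
      simp only [List.getD_cons_succ]
      set i' : ℕ := i - 2 ^ (n+1) with hi'def
      have hilt : i' < 2 ^ (n+1) - 1 := by omega
      rw [ih i' (by omega)]
      -- f (2^(n+1) + i') = f i'
      have hieq : i = 2 ^ (n+1) + i' := by omega
      rw [hieq, f, f]
      have hpar : (2 ^ (n+1) + i') % 2 = i' % 2 := by omega
      rcases Nat.even_or_odd i' with he | ho
      · rw [Nat.even_iff] at he
        rw [if_pos (by omega), if_pos (by omega)]
      · rw [Nat.odd_iff] at ho
        rw [if_neg (by omega), if_neg (by omega)]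
        congr 1
        have h2n : 2 ^ (n+1) = 2 * 2 ^ n := by ring
        set m : ℕ := (i' + 1) / 2 with hm
        have hdiv : (2 ^ (n+1) + i' + 1) / 2 = 1 * 2 ^ n + m := by omega
        rw [hdiv, v2_qpow_add n 1 m (by omega) (by omega)]

lemma eta_eq_f (i : ℕ) : eta i = f i := by
  have h1 : i < (pw (i + 1)).length := by
    have := Nat.lt_two_pow_self (n := i)
    have h2 : 2 ^ (i + 2) = 4 * 2 ^ i := by ring
    rw [pw_length]
    omega
  exact pw_getD_eq_f (i + 1) i h1

/-- The factor of `η` (via the closed formula) starting at `i` of length `L`. -/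
def seg (i L : ℕ) : List A := (List.range L).map (fun k => f (i + k))

lemma seg_length (i L : ℕ) : (seg i L).length = L := by simp [seg]

lemma seg_append (i L1 L2 : ℕ) : seg i (L1 + L2) = seg i L1 ++ seg (i + L1) L2 := by
  simp only [seg, List.range_add, List.map_append, List.map_map]
  congr 1
  apply List.map_congr_left
  intro k _
  simp [add_assoc]

lemma seg_infix {i L i' L' : ℕ} (h1 : i' ≤ i) (h2 : i + L ≤ i' + L') :
    seg i L <:+: seg i' L' := by
  have hL' : L' = (i - i') + (L + (i' + L' - (i + L))) := by omega
  rw [hL', seg_append, seg_append]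
  have hii : i' + (i - i') = i := by omega
  rw [hii]
  exact ⟨seg i' (i - i'), seg (i + L) (i' + L' - (i + L)), by simp⟩

lemma f_block (n j k : ℕ) (hk : k < 2 ^ (n + 1) - 1) :
    f (j * 2 ^ (n + 1) + k) = f k := by
  have hP : 2 ^ (n + 1) = 2 * 2 ^ n := by ring
  rw [f, f]
  have hje : j * 2 ^ (n + 1) = 2 * (j * 2 ^ n) := by rw [hP]; ring
  rcases Nat.even_or_odd k with he | ho
  · rw [Nat.even_iff] at he
    rw [if_pos (by omega), if_pos (by omega)]
  · rw [Nat.odd_iff] at ho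
    rw [if_neg (by omega), if_neg (by omega)]
    congr 1
    set m : ℕ := (k + 1) / 2 with hm
    have hdiv : (j * 2 ^ (n + 1) + k + 1) / 2 = j * 2 ^ n + m := by omega
    rw [hdiv, v2_qpow_add n j m (by omega) (by omega)]

lemma f_sep (n j : ℕ) : f ((j + 1) * 2 ^ (n + 1) - 1) = c (n + v2 (j + 1)) := by
  have hP : 2 ^ (n + 1) = 2 * 2 ^ n := by ring
  have hjp : (j + 1) * 2 ^ (n + 1) = 2 * ((j + 1) * 2 ^ n) := by rw [hP]; ring
  have hpos : 1 ≤ (j + 1) * 2 ^ n := Nat.one_le_iff_ne_zero.2 (by positivity)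
  rw [f, if_neg (by omega)]
  congr 1
  have hdiv : ((j + 1) * 2 ^ (n + 1) - 1 + 1) / 2 = (j + 1) * 2 ^ n := by omega
  rw [hdiv, v2_mul_pow n (j + 1) (by omega)]

lemma seg_pw (n j : ℕ) : seg (j * 2 ^ (n + 1)) (2 ^ (n + 1) - 1) = pw n := by
  apply List.ext_getElem
  · rw [seg_length, pw_length]
  · intro k h1 h2
    have hk : k < 2 ^ (n + 1) - 1 := by rwa [seg_length] at h1
    have : (seg (j * 2 ^ (n + 1)) (2 ^ (n + 1) - 1))[k] = f (j * 2 ^ (n + 1) + k) := by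
      simp [seg]
    rw [this, f_block n j k hk, ← List.getD_eq_getElem (pw n) A.a h2,
      pw_getD_eq_f n k (by rwa [pw_length])]

lemma seg_block (n j : ℕ) :
    seg (j * 2 ^ (n + 1)) (2 * 2 ^ (n + 1) - 1) = pw n ++ c (n + v2 (j + 1)) :: pw n := by
  have hP : 1 ≤ 2 ^ (n + 1) := Nat.one_le_two_pow
  have hsplit : 2 * 2 ^ (n + 1) - 1 = (2 ^ (n + 1) - 1) + (1 + (2 ^ (n + 1) - 1)) := by omega
  rw [hsplit, seg_append, seg_append, seg_pw]
  have h1 : seg (j * 2 ^ (n + 1) + (2 ^ (n + 1) - 1)) 1 = [c (n + v2 (j + 1))] := by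
    have : seg (j * 2 ^ (n + 1) + (2 ^ (n + 1) - 1)) 1
        = [f (j * 2 ^ (n + 1) + (2 ^ (n + 1) - 1))] := by
      rw [seg, show List.range 1 = [0] from rfl]
      simp
    rw [this]
    have heq : j * 2 ^ (n + 1) + (2 ^ (n + 1) - 1) = (j + 1) * 2 ^ (n + 1) - 1 := by
      have : (j + 1) * 2 ^ (n+1) = j * 2 ^ (n+1) + 2 ^ (n+1) := by ring
      omega
    rw [heq, f_sep]
  have h2 : j * 2 ^ (n + 1) + (2 ^ (n + 1) - 1) + 1 = (j + 1) * 2 ^ (n + 1) := by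
    have : (j + 1) * 2 ^ (n+1) = j * 2 ^ (n+1) + 2 ^ (n+1) := by ring
    omega
  rw [h1, h2, seg_pw n (j + 1)]
  simp

lemma exists_v2_window (M e : ℕ) (he : e < 3) : ∃ m, M ≤ m ∧ m ≤ M + 12 ∧ v2 m = e := by
  have hdm : 2 ^ (e + 1) * (M / 2 ^ (e + 1)) + M % 2 ^ (e + 1) = M := Nat.div_add_mod M _
  have hmod : M % 2 ^ (e + 1) < 2 ^ (e + 1) := Nat.mod_lt M (by positivity)
  set q := M / 2 ^ (e + 1) with hq
  have hb : 2 ^ e ≤ 4 ∧ 2 ^ (e + 1) ≤ 8 ∧ 2 ^ (e + 1) = 2 * 2 ^ e := by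
    interval_cases e <;> norm_num
  have hv0 : v2 (2 ^ (e + 1) * q + 2 ^ e) = e := by
    rw [show 2 ^ (e + 1) * q + 2 ^ e = 2 ^ e * (2 * q + 1) by rw [hb.2.2]; ring]
    exact v2_pow_mul e _ (by omega)
  have hv1 : v2 (2 ^ (e + 1) * q + 2 ^ (e + 1) + 2 ^ e) = e := by
    rw [show 2 ^ (e + 1) * q + 2 ^ (e + 1) + 2 ^ e = 2 ^ e * (2 * q + 3) by rw [hb.2.2]; ring]
    exact v2_pow_mul e _ (by omega)
  rcases le_or_gt M (2 ^ (e + 1) * q + 2 ^ e) with h | h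
  · exact ⟨_, h, by omega, hv0⟩
  · exact ⟨_, by omega, by omega, hv1⟩

lemma factor_seg {u : List A} (h : IsFactorEta u) : ∃ i, u = seg i u.length := by
  obtain ⟨i, hi⟩ := h
  refine ⟨i, ?_⟩
  rw [hi]
  simp [seg, eta_eq_f]


/-- **Linear repetitivity** of the subshift generated by the fixed point `η` of `τ`:
there is a constant `C > 0` such that every nonempty factor `v` of `η` occurs in
every factor `w` of `η` whose length is at least `C * |v|`. -/
theorem eta_linearly_repetitive :
    ∃ C : ℝ, 0 < C ∧
      ∀ v w : List A, IsFactorEta v → v ≠ [] → IsFactorEta w →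
        C * v.length ≤ (w.length : ℝ) → v <:+: w := by
  refine ⟨38, by norm_num, ?_⟩
  intro v w hv hne hw hlen
  obtain ⟨i, hvseg⟩ := factor_seg hv
  obtain ⟨i', hwseg⟩ := factor_seg hw
  set L := v.length with hLdef
  have hL1 : 1 ≤ L := List.length_pos_iff.mpr hne
  set n := Nat.log 2 L with hn
  have hlow : 2 ^ n ≤ L := Nat.pow_log_le_self 2 (by omega)
  have hhigh : L < 2 ^ (n + 1) := Nat.lt_pow_succ_log_self (by norm_num) L
  have hBpos : (1 : ℕ) ≤ 2 ^ (n + 1) := Nat.one_le_two_pow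
  have hB2 : (2 : ℕ) ^ (n + 1) = 2 * 2 ^ n := by ring
  have h38 : 38 * L ≤ w.length := by exact_mod_cast hlen
  have h19 : 19 * 2 ^ (n + 1) ≤ w.length := by omega
  -- v sits inside the double block at j0
  set j0 := i / 2 ^ (n + 1) with hj0
  have hdm0 : j0 * 2 ^ (n + 1) + i % 2 ^ (n + 1) = i := by
    rw [mul_comm]; exact Nat.div_add_mod i _
  have hmod0 : i % 2 ^ (n + 1) < 2 ^ (n + 1) := Nat.mod_lt i (by omega)
  have hvD : v <:+: seg (j0 * 2 ^ (n + 1)) (2 * 2 ^ (n + 1) - 1) := by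
    rw [hvseg]
    exact seg_infix (by omega) (by omega)
  rw [seg_block] at hvD
  -- find a matching double block inside w
  obtain ⟨q1, hq1⟩ : ∃ q, i' / 2 ^ (n + 1) = q := ⟨_, rfl⟩
  have hdm1 : q1 * 2 ^ (n + 1) + i' % 2 ^ (n + 1) = i' := by
    rw [← hq1, mul_comm]; exact Nat.div_add_mod i' _
  have hmod1 : i' % 2 ^ (n + 1) < 2 ^ (n + 1) := Nat.mod_lt i' (by omega)
  obtain ⟨m, hm1, hm2, hm3⟩ :=
    exists_v2_window (q1 + 2) (v2 (j0 + 1) % 3) (Nat.mod_lt _ (by norm_num))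
  obtain ⟨j, rfl⟩ : ∃ j, m = j + 1 := ⟨m - 1, by omega⟩
  have hceq : c (n + v2 (j + 1)) = c (n + v2 (j0 + 1)) := by
    apply c_congr
    rw [hm3]
    omega
  have hjlb : (q1 + 1) * 2 ^ (n + 1) ≤ j * 2 ^ (n + 1) := Nat.mul_le_mul_right _ (by omega)
  have hjub : j * 2 ^ (n + 1) ≤ (q1 + 13) * 2 ^ (n + 1) := Nat.mul_le_mul_right _ (by omega)
  have hexp1 : (q1 + 1) * 2 ^ (n + 1) = q1 * 2 ^ (n + 1) + 2 ^ (n + 1) := by ring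
  have hexp13 : (q1 + 13) * 2 ^ (n + 1) = q1 * 2 ^ (n + 1) + 13 * 2 ^ (n + 1) := by ring
  have hDw : seg (j * 2 ^ (n + 1)) (2 * 2 ^ (n + 1) - 1) <:+: w := by
    rw [hwseg]
    exact seg_infix (by omega) (by omega)
  rw [seg_block] at hDw
  rw [hceq] at hDw
  exact hvD.trans hDw
end

section
/- Let B be any type and let C : A → B be a map such that C(x), C(y), C(z) are not all equal. Then: (i) no element of the recoded subshift is periodic, i.e., for every ω ∈ Ω_τ and every integer p ≥ 1 there exists n ∈ ℤ with C(ω(n+p)) ≠ C(ω(n)); and (ii) the recoded system is linearly repetitive, i.e., there exists K > 0 such that every nonempty factor v of the recoded word C∘η occurs in every factor w of C∘η with |w| ≥ K·|v|. -/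
/-- `Ω_τ`: the set of two-sided sequences all of whose finite factors are factors of `η`. -/
def OmegaTau (ω : ℤ → A) : Prop :=
  ∀ (i : ℤ) (n : ℕ), IsFactorEta ((List.range n).map (fun k => ω (i + k)))

/-- `w` is a factor of the recoded word `C ∘ η`. -/
def IsFactorEtaC {B : Type*} (C : A → B) (w : List B) : Prop :=
  ∃ i : ℕ, w = (List.range w.length).map (fun k => C (eta (i + k)))

def psi : A → A
  | A.a => A.x
  | A.x => A.y
  | A.y => A.z
  | A.z => A.x

lemma psi_ne_a (c : A) : psi c ≠ A.a := by cases c <;> simp [psi]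

def etaF (n : ℕ) : A :=
  if h : n % 2 = 0 then A.a else psi (etaF (n / 2))
decreasing_by omega

lemma etaF_even (k : ℕ) : etaF (2 * k) = A.a := by
  rw [etaF]; simp [Nat.mul_mod_right]

lemma etaF_odd (k : ℕ) : etaF (2 * k + 1) = psi (etaF k) := by
  rw [etaF]
  have h1 : (2 * k + 1) % 2 = 1 := by omega
  have h2 : (2 * k + 1) / 2 = k := by omega
  simp [h1, h2]

lemma tau_psi (c : A) : tau (psi c) = [psi (psi c)] := by cases c <;> rfl

lemma key (l : ℕ) :
    tauW ((List.range (2 * l + 1)).map etaF) = (List.range (4 * l + 3)).map etaF := by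
  induction l with
  | zero =>
    show tauW ([0].map etaF) = ([0, 1, 2].map etaF)
    have h0 : etaF 0 = A.a := etaF_even 0
    have h1 : etaF 1 = A.x := by have := etaF_odd 0; simp [h0] at this; simpa [psi] using this
    have h2 : etaF 2 = A.a := etaF_even 1
    simp [tauW, h0, h1, h2, tau]
  | succ l ih =>
    have A1 : List.range (2*(l+1)+1) = List.range (2*l+1) ++ [2*l+1, 2*l+1+1] := by
      rw [show 2*(l+1)+1 = ((2*l+1)+1)+1 by ring, List.range_succ, List.range_succ]
      simp
    have A2 : List.range (4*(l+1)+3) = List.range (4*l+3)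
        ++ [4*l+3, 4*l+3+1, 4*l+3+1+1, 4*l+3+1+1+1] := by
      rw [show 4*(l+1)+3 = ((((4*l+3)+1)+1)+1)+1 by ring, List.range_succ, List.range_succ,
        List.range_succ, List.range_succ]
      simp
    rw [A1, A2]
    simp only [List.map_append, List.map_cons, List.map_nil]
    rw [show tauW ((List.range (2*l+1)).map etaF ++ [etaF (2*l+1), etaF (2*l+1+1)])
        = tauW ((List.range (2*l+1)).map etaF) ++ tauW [etaF (2*l+1), etaF (2*l+1+1)]
      from by simp [tauW]]
    rw [ih]
    have h1 : etaF (2*l+1) = psi (etaF l) := etaF_odd l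
    have h2 : etaF (2*l+1+1) = A.a := by rw [show 2*l+1+1 = 2*(l+1) by ring, etaF_even]
    have h3 : etaF (4*l+3) = psi (psi (etaF l)) := by
      rw [show 4*l+3 = 2*(2*l+1)+1 by ring, etaF_odd, h1]
    have h4 : etaF (4*l+3+1) = A.a := by rw [show 4*l+3+1 = 2*(2*l+2) by ring, etaF_even]
    have h5 : etaF (4*l+3+1+1) = A.x := by
      rw [show 4*l+3+1+1 = 2*(2*l+2)+1 by ring, etaF_odd,
        show 2*l+2 = 2*(l+1) by ring, etaF_even]; rfl
    have h6 : etaF (4*l+3+1+1+1) = A.a := by rw [show 4*l+3+1+1+1 = 2*(2*l+3) by ring, etaF_even]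
    rw [h1, h2, h3, h4, h5, h6]
    simp only [tauW, List.flatMap_cons, List.flatMap_nil, List.append_nil]
    rw [tau_psi]
    rfl

lemma pw_eq (m : ℕ) : pw m = (List.range (2 * (2 ^ m - 1) + 1)).map etaF := by
  induction m with
  | zero =>
    show pw 0 = ([0].map etaF)
    simp [pw, etaF_even 0]
  | succ m ih =>
    have : pw (m+1) = tauW ((List.range (2 * (2 ^ m - 1) + 1)).map etaF) := by
      rw [pw, ih]
    rw [this, key]
    congr 2
    have : 1 ≤ 2 ^ m := Nat.one_le_two_pow
    omega

lemma eta_eq (n : ℕ) : eta n = etaF n := by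
  have hlen : n < 2 * (2 ^ (n+1) - 1) + 1 := by
    have : n + 1 < 2 ^ (n + 1) := Nat.lt_two_pow_self (n := n + 1)
    omega
  rw [eta, pw_eq]
  rw [List.getD_eq_getElem?_getD, List.getElem?_map, List.getElem?_range hlen]
  rfl

lemma etaF_cong (M : ℕ) : ∀ q q' r, r < 2^M → r ≠ 2^M - 1 →
    etaF (2^M * q + r) = etaF (2^M * q' + r) := by
  induction M with
  | zero => intro q q' r h1 h2; exfalso; simp at h1; omega
  | succ M IH =>
    intro q q' r h1 h2
    have hp : 2^(M+1) = 2 * 2^M := by rw [pow_succ]; ring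
    rcases Nat.even_or_odd r with ⟨r1, hr⟩ | ⟨r1, hr⟩
    · subst hr
      rw [show 2^(M+1) * q + (r1 + r1) = 2 * (2^M * q + r1) by rw [hp]; ring,
        show 2^(M+1) * q' + (r1 + r1) = 2 * (2^M * q' + r1) by rw [hp]; ring,
        etaF_even, etaF_even]
    · subst hr
      rw [show 2^(M+1) * q + (2*r1+1) = 2 * (2^M * q + r1) + 1 by rw [hp]; ring,
        show 2^(M+1) * q' + (2*r1+1) = 2 * (2^M * q' + r1) + 1 by rw [hp]; ring,
        etaF_odd, etaF_odd]
      exact congrArg psi (IH q q' r1 (by omega) (by omega))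

lemma etaF_special (M : ℕ) : ∀ q, etaF (2^M * q + (2^M - 1)) = psi^[M] (etaF q) := by
  induction M with
  | zero => intro q; simp
  | succ M IH =>
    intro q
    have h1 : (1:ℕ) ≤ 2^M := Nat.one_le_two_pow
    have e0 : 2^(M+1) - 1 = 2*(2^M - 1) + 1 := by omega
    have hp : 2^(M+1) = 2 * 2^M := by rw [pow_succ]; ring
    rw [e0, hp, show 2 * 2^M * q + (2*(2^M - 1) + 1) = 2 * (2^M * q + (2^M - 1)) + 1 by ring,
      etaF_odd, IH, Function.iterate_succ_apply']

lemma etaF_cong' (M n n' : ℕ) (h1 : n % 2^M = n' % 2^M) (h2 : n % 2^M ≠ 2^M - 1) :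
    etaF n = etaF n' := by
  have hpos : 0 < 2^M := by positivity
  conv_lhs => rw [← Nat.div_add_mod n (2^M)]
  conv_rhs => rw [← Nat.div_add_mod n' (2^M)]
  rw [h1] at h2 ⊢
  exact etaF_cong M _ _ _ (Nat.mod_lt _ hpos) h2

lemma etaF_special' (M n : ℕ) (h : n % 2^M = 2^M - 1) :
    etaF n = psi^[M] (etaF (n / 2^M)) := by
  conv_lhs => rw [← Nat.div_add_mod n (2^M), h]
  exact etaF_special M _

lemma etaF_even' (n : ℕ) (h : n % 2 = 0) : etaF n = A.a := by
  obtain ⟨k, rfl⟩ : ∃ k, n = 2*k := ⟨n/2, by omega⟩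
  exact etaF_even k

lemma etaF_mod4 (n : ℕ) (h : n % 4 = 1) : etaF n = A.x := by
  obtain ⟨k, rfl⟩ : ∃ k, n = 2*(2*k)+1 := ⟨n/4, by omega⟩
  rw [etaF_odd, etaF_even]; rfl

lemma etaF_mod8 (n : ℕ) (h : n % 8 = 3) : etaF n = A.y := by
  obtain ⟨k, rfl⟩ : ∃ k, n = 2*(2*(2*k)+1)+1 := ⟨n/8, by omega⟩
  rw [etaF_odd, etaF_odd, etaF_even]; rfl

lemma etaF_mod16 (n : ℕ) (h : n % 16 = 7) : etaF n = A.z := by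
  obtain ⟨k, rfl⟩ : ∃ k, n = 2*(2*(2*(2*k)+1)+1)+1 := ⟨n/16, by omega⟩
  rw [etaF_odd, etaF_odd, etaF_odd, etaF_even]; rfl

lemma cycle (b c : A) (hb : b ≠ A.a) (hc : c ≠ A.a) : ∃ r, r < 3 ∧ psi^[r] b = c := by
  cases b <;> cases c <;>
    first
      | exact absurd rfl hb
      | exact absurd rfl hc
      | exact ⟨0, by omega, by decide⟩
      | exact ⟨1, by omega, by decide⟩
      | exact ⟨2, by omega, by decide⟩

lemma realize (M : ℕ) (hM : 1 ≤ M) (c : A) (hc : c ≠ A.a) (q : ℕ) :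
    ∃ d, d < 8 ∧ psi^[M] (etaF (q + d)) = c := by
  have hb : psi^[M] A.a ≠ A.a := by
    obtain ⟨M', rfl⟩ : ∃ M', M = M'+1 := ⟨M-1, by omega⟩
    rw [Function.iterate_succ_apply']; exact psi_ne_a _
  obtain ⟨r, hr3, hr⟩ := cycle _ c hb hc
  have keyd : ∀ d, etaF (q + d) = psi^[r] A.a → psi^[M] (etaF (q+d)) = c := by
    intro d hd
    rw [hd, ← Function.iterate_add_apply, add_comm, Function.iterate_add_apply, hr]
  interval_cases r
  · obtain ⟨d, hd8, hdm⟩ : ∃ d, d < 8 ∧ (q+d) % 2 = 0 := ⟨(2 - q % 2) % 2, by omega, by omega⟩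
    exact ⟨d, hd8, keyd d (by rw [etaF_even' _ hdm]; rfl)⟩
  · obtain ⟨d, hd8, hdm⟩ : ∃ d, d < 8 ∧ (q+d) % 4 = 1 := ⟨(5 - q % 4) % 4, by omega, by omega⟩
    exact ⟨d, hd8, keyd d (by rw [etaF_mod4 _ hdm]; decide)⟩
  · obtain ⟨d, hd8, hdm⟩ : ∃ d, d < 8 ∧ (q+d) % 8 = 3 := ⟨(11 - q % 8) % 8, by omega, by omega⟩
    exact ⟨d, hd8, keyd d (by rw [etaF_mod8 _ hdm]; decide)⟩

lemma rep (P : ℕ) (hP : 0 < P) (s : ℕ) (hs : s < P) (j : ℕ) :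
    ∃ i', j ≤ i' ∧ i' < j + P ∧ i' % P = s := by
  obtain ⟨t, m, hm, rfl⟩ : ∃ t m, m < P ∧ j = P * t + m :=
    ⟨j / P, j % P, Nat.mod_lt _ hP, (Nat.div_add_mod j P).symm⟩
  by_cases h : m ≤ s
  · refine ⟨P * t + s, by omega, by omega, ?_⟩
    rw [Nat.mul_add_mod]; exact Nat.mod_eq_of_lt hs
  · refine ⟨P * t + (P + s), by omega, by omega, ?_⟩
    rw [Nat.mul_add_mod, Nat.add_mod_left]; exact Nat.mod_eq_of_lt hs

lemma rec_core (M P : ℕ) (hM : 1 ≤ M) (hPM : P = 2^M) (L : ℕ) (hL : L ≤ P) (i j : ℕ) :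
    ∃ i', j ≤ i' ∧ i' < j + 9 * P ∧ ∀ k, k < L → etaF (i' + k) = etaF (i + k) := by
  have hP : 0 < P := by rw [hPM]; positivity
  have hPeven : P % 2 = 0 := by
    obtain ⟨M', rfl⟩ : ∃ M', M = M' + 1 := ⟨M - 1, by omega⟩
    rw [hPM, pow_succ]; exact Nat.mul_mod_left _ _
  have hmi : i % P < P := Nat.mod_lt _ hP
  -- the (possible) special offset
  set k₀ : ℕ := P - 1 - i % P with hk0def
  have hk0P : k₀ < P := by omega
  -- residues in the window
  have hmodk : ∀ i'' k, i'' % P = i % P → k < L → (i'' + k) % P = (i % P + k) % P := by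
    intro i'' k h hk
    rw [Nat.add_mod, h, Nat.mod_eq_of_lt (by omega : k < P)]
  -- non-special residues are ≠ P - 1
  have hnonspec : ∀ k, k < L → k ≠ k₀ → (i % P + k) % P ≠ P - 1 := by
    intro k hk hne
    by_cases hlt : k < k₀
    · rw [Nat.mod_eq_of_lt (by omega)]; omega
    · obtain ⟨e, he1, he2, hee⟩ : ∃ e, 1 ≤ e ∧ e ≤ P - 1 ∧ i % P + k = P + (e - 1) :=
        ⟨k - k₀, by omega, by omega, by omega⟩
      rw [hee, Nat.add_mod_left, Nat.mod_eq_of_lt (by omega)]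
      omega
  obtain ⟨i₀, hj0, hup0, hmod0⟩ := rep P hP (i % P) hmi j
  by_cases hcase : k₀ < L
  · -- special position inside the window
    have hik₀ : (i + k₀) % P = P - 1 := by
      rw [hmodk i k₀ rfl hcase, Nat.mod_eq_of_lt (by omega : i % P + k₀ < P)]
      omega
    have hdvd : (2:ℕ) ∣ P := Nat.dvd_of_mod_eq_zero hPeven
    have hodd : (i + k₀) % 2 = 1 := by
      rw [← Nat.mod_mod_of_dvd _ hdvd, hik₀]; omega
    have hc_ne : etaF (i + k₀) ≠ A.a := by
      obtain ⟨k', hk'⟩ : ∃ k', i + k₀ = 2*k' + 1 := ⟨(i+k₀)/2, by omega⟩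
      rw [hk', etaF_odd]; exact psi_ne_a _
    obtain ⟨d, hd8, hd⟩ := realize M hM (etaF (i + k₀)) hc_ne ((i₀ + k₀) / P)
    have hdb : P * d ≤ P * 7 := Nat.mul_le_mul_left _ (by omega)
    refine ⟨i₀ + P * d, by omega, by omega, ?_⟩
    have hmod' : (i₀ + P * d) % P = i % P := by
      rw [Nat.add_mul_mod_self_left, hmod0]
    intro k hk
    by_cases hkk : k = k₀
    · subst hkk
      have hmodsp : (i₀ + P * d + k₀) % P = P - 1 := by
        rw [hmodk _ k₀ hmod' hk, Nat.mod_eq_of_lt (by omega : i % P + k₀ < P)]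
        omega
      have hdiv : (i₀ + P * d + k₀) / P = (i₀ + k₀) / P + d := by
        rw [show i₀ + P * d + k₀ = (i₀ + k₀) + P * d by ring, Nat.add_mul_div_left _ _ hP]
      rw [etaF_special' M _ (by rw [← hPM]; exact hmodsp), ← hPM, hdiv]
      exact hd
    · apply etaF_cong' M
      · rw [← hPM, hmodk _ k hmod' hk, hmodk i k rfl hk]
      · rw [← hPM, hmodk _ k hmod' hk]
        exact hnonspec k hk hkk
  · -- no special position in the window
    refine ⟨i₀, hj0, by omega, ?_⟩
    intro k hk
    apply etaF_cong' M
    · rw [← hPM, hmodk _ k hmod0 hk, hmodk i k rfl hk]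
    · rw [← hPM, hmodk _ k hmod0 hk]
      exact hnonspec k hk (by omega)

lemma recur (L i j : ℕ) (hL : 1 ≤ L) :
    ∃ i', j ≤ i' ∧ i' + L ≤ j + 32 * L ∧ ∀ k, k < L → etaF (i' + k) = etaF (i + k) := by
  set M : ℕ := Nat.log 2 L + 1 with hM
  have h1 : L < 2 ^ M := Nat.lt_pow_succ_log_self (by norm_num) L
  have h2 : 2 ^ M ≤ 2 * L := by
    rw [hM, pow_succ, mul_comm]
    exact Nat.mul_le_mul_left 2 (Nat.pow_log_le_self 2 (by omega))
  obtain ⟨i', ha, hb, hc⟩ := rec_core M (2^M) (by omega) rfl L (by omega) i j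
  exact ⟨i', ha, by omega, hc⟩

lemma exists_letter (t : A) (ht : t ≠ A.a) (s : ℕ) :
    ∃ e, s ≤ e ∧ e < s + 16 ∧ e % 2 = 1 ∧ etaF e = t := by
  cases t with
  | a => exact absurd rfl ht
  | x =>
    obtain ⟨e, h1, h2, h3⟩ : ∃ e, s ≤ e ∧ e < s + 16 ∧ e % 4 = 1 :=
      ⟨s + (5 - s % 4) % 4, by omega, by omega, by omega⟩
    exact ⟨e, h1, h2, by omega, etaF_mod4 e h3⟩
  | y =>
    obtain ⟨e, h1, h2, h3⟩ : ∃ e, s ≤ e ∧ e < s + 16 ∧ e % 8 = 3 :=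
      ⟨s + (11 - s % 8) % 8, by omega, by omega, by omega⟩
    exact ⟨e, h1, h2, by omega, etaF_mod8 e h3⟩
  | z =>
    obtain ⟨e, h1, h2, h3⟩ : ∃ e, s ≤ e ∧ e < s + 16 ∧ e % 16 = 7 :=
      ⟨s + (23 - s % 16) % 16, by omega, by omega, by omega⟩
    exact ⟨e, h1, h2, by omega, etaF_mod16 e h3⟩

lemma AP : ∀ (p : ℕ), 1 ≤ p → ∀ {B : Type*} (C : A → B),
    ¬ (C A.x = C A.y ∧ C A.y = C A.z) →
    ∃ N, ∀ i, ∃ j, j + p ≤ N ∧ C (etaF (i + j + p)) ≠ C (etaF (i + j)) := by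
  intro p
  induction p using Nat.strong_induction_on with
  | _ p IH =>
    intro hp B C hC
    rcases Nat.even_or_odd p with ⟨q, hq⟩ | ⟨q, hq⟩
    · -- p even, p = q + q with q ≥ 1
      have hq1 : 1 ≤ q := by omega
      obtain ⟨N', hN'⟩ := IH q (by omega) hq1 (fun c => C (psi c))
        (by
          intro ⟨h1, h2⟩
          simp only [psi] at h1 h2
          exact hC ⟨h2.symm.trans h1.symm, h1⟩)
      refine ⟨2 * N' + 2, ?_⟩
      intro i
      obtain ⟨j', hj'N, hne⟩ := hN' (i / 2)
      set m := i / 2 + j' with hm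
      refine ⟨2 * m + 1 - i, ?_, ?_⟩
      · omega
      · have e1 : i + (2 * m + 1 - i) + p = 2 * (m + q) + 1 := by omega
        have e2 : i + (2 * m + 1 - i) = 2 * m + 1 := by omega
        rw [e1, e2, etaF_odd, etaF_odd]
        exact hne
    · -- p odd
      have hdiff : ∃ t : A, t ≠ A.a ∧ C t ≠ C A.a := by
        by_cases hx : C A.x = C A.a
        · by_cases hy : C A.y = C A.a
          · by_cases hz : C A.z = C A.a
            · exact absurd ⟨hx.trans hy.symm, hy.trans hz.symm⟩ hC
            · exact ⟨A.z, by simp, hz⟩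
          · exact ⟨A.y, by simp, hy⟩
        · exact ⟨A.x, by simp, hx⟩
      obtain ⟨t, hta, htC⟩ := hdiff
      refine ⟨p + 16, ?_⟩
      intro i
      obtain ⟨e, he1, he2, he3, he4⟩ := exists_letter t hta (i + p)
      refine ⟨e - p - i, by omega, ?_⟩
      have e1 : i + (e - p - i) + p = e := by omega
      have e2 : i + (e - p - i) = e - p := by omega
      rw [e1, e2, he4, etaF_even' (e - p) (by omega)]
      exact htC

lemma map_range_infix {β : Type*} (g : ℕ → β) (d L Lw : ℕ) (h : d + L ≤ Lw) :
    ((List.range L).map (fun k => g (d + k))) <:+: ((List.range Lw).map g) := by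
  refine ⟨(List.range d).map g, (List.range' (d + L) (Lw - (d + L))).map g, ?_⟩
  have hmid : (List.range L).map (fun k => g (d + k)) = (List.range' d L).map g := by
    rw [List.range'_eq_map_range, List.map_map]; rfl
  rw [hmid, ← List.map_append, ← List.map_append]
  congr 1
  rw [List.range_eq_range' (n := d), List.range_eq_range' (n := Lw)]
  have e1 : List.range' 0 d ++ List.range' (0 + 1 * d) L = List.range' 0 (L + d) :=
    by rw [Nat.add_comm L d]; exact List.range'_append
  simp only [Nat.zero_add, Nat.one_mul] at e1
  have e2 : List.range' 0 (L + d) ++ List.range' (0 + 1 * (L + d)) (Lw - (d + L))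
      = List.range' 0 ((Lw - (d + L)) + (L + d)) := by rw [Nat.add_comm (Lw - (d + L))]; exact List.range'_append
  simp only [Nat.zero_add, Nat.one_mul] at e2
  rw [show (d + L) = (L + d) by omega, e1]
  have e2 : List.range' 0 (L + d) ++ List.range' (0 + 1 * (L + d)) (Lw - (L + d))
      = List.range' 0 ((Lw - (L + d)) + (L + d)) := by rw [Nat.add_comm (Lw - (L + d))]; exact List.range'_append
  simp only [Nat.zero_add, Nat.one_mul] at e2
  rw [e2]
  congr 1
  omega

/-- If `C : A → B` does not identify all three of `x, y, z`, then the recoded system is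
aperiodic and linearly repetitive. -/
theorem recoded_aperiodic_and_linearly_repetitive {B : Type*} (C : A → B)
    (hC : ¬ (C A.x = C A.y ∧ C A.y = C A.z)) :
    (∀ ω : ℤ → A, OmegaTau ω → ∀ p : ℤ, 1 ≤ p →
      ∃ n : ℤ, C (ω (n + p)) ≠ C (ω n)) ∧
    (∃ K : ℝ, 0 < K ∧
      ∀ v w : List B, IsFactorEtaC C v → v ≠ [] → IsFactorEtaC C w →
        K * v.length ≤ (w.length : ℝ) → v <:+: w) := by
  constructor
  · -- aperiodicity
    intro ω hω p hp
    by_contra hcon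
    push_neg at hcon
    set pn := p.toNat with hpn
    have hppn : (pn : ℤ) = p := Int.toNat_of_nonneg (by linarith)
    have hpn1 : 1 ≤ pn := by omega
    obtain ⟨N, hN⟩ := AP pn hpn1 C hC
    set n := N + 1 with hn
    obtain ⟨i, hfac⟩ := hω 0 n
    have hco : (do let a ← List.range n; pure ((a : ℕ) : ℤ))
        = (List.range n).map (fun a : ℕ => (a : ℤ)) := by
      show (List.range n).flatMap (fun a : ℕ => [((a : ℕ) : ℤ)]) = _
      induction (List.range n) with
      | nil => rfl
      | cons h t ih => simp [List.flatMap_cons, ih]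
    rw [hco] at hfac
    simp only [List.map_map, List.length_map, List.length_range] at hfac
    have hpt : ∀ k, k < n → ω ((k : ℕ) : ℤ) = eta (i + k) := by
      intro k hk
      have h1 := congrArg (fun l => l.getD k A.a) hfac
      simp only [List.getD_eq_getElem?_getD, List.getElem?_map, List.getElem?_range, hk] at h1
      simpa using h1
    obtain ⟨j, hjN, hne⟩ := hN i
    apply hne
    have k1 : j + pn < n := by omega
    have k2 : j < n := by omega
    rw [← eta_eq, ← eta_eq, show i + j + pn = i + (j + pn) by ring,
      ← hpt _ k1, ← hpt _ k2]
    rw [show ((j + pn : ℕ) : ℤ) = (j : ℤ) + p by push_cast [hppn]; ring]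
    exact hcon j
  · -- linear repetitivity
    refine ⟨32, by norm_num, ?_⟩
    intro v w hv hvne hw hlen
    obtain ⟨iv, hveq⟩ := hv
    obtain ⟨iw, hweq⟩ := hw
    have hL1 : 1 ≤ v.length := List.length_pos_iff.mpr hvne
    have hLN : 32 * v.length ≤ w.length := by exact_mod_cast hlen
    obtain ⟨i', h1, h2, h3⟩ := recur v.length iv iw hL1
    have hvf : v = (List.range v.length).map
        (fun k => C (eta (iw + ((i' - iw) + k)))) := by
      conv_lhs => rw [hveq]
      apply List.map_congr_left
      intro k hk
      rw [List.mem_range] at hk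
      have e : iw + ((i' - iw) + k) = i' + k := by omega
      rw [e, eta_eq, eta_eq, h3 k hk]
    have := map_range_infix (fun nn => C (eta (iw + nn))) (i' - iw) v.length w.length
      (by omega)
    rw [← hvf, ← hweq] at this
    exact this
end
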